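/- If v, g, u, n, t are positive integers with v = g·t·u, and (1) the complete u-partite graph of type g^u admits a resolvable decomposition into copies of K_n with h = g(u-1)/(n-1) parallel classes, (2) for each triple (r1,s1,t1) in a set J1 the complete n-partite graph of type t^n admits a uniformly resolvable (P_2,P_3,P_4)-decomposition with r1 matchings, s1 P_3-classes, t1 P_4-classes, and (3) for each (r2,s2,t2) in a set J2 the complete graph K_{gt} admits such a decomposition, then for every (r,s,t) ∈ J2 + h * J1 the complete graph K_v admits a uniformly resolvable (P_2,P_3,P_4)-decomposition with the corresponding class counts. -/

import Mathlib

open Pointwise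

/-- The edges of a path given by the list of its vertices in order. -/
def pathEdges {V : Type*} [DecidableEq V] (l : List V) : Finset (Sym2 V) :=
  ((l.zip l.tail).map fun p => Sym2.mk p.1 p.2).toFinset

/-- A parallel class of paths on `k` vertices in a graph `G`: a set of lists, each
a path on `k` vertices of `G`, which are vertex-disjoint and cover every vertex. -/
def IsPathClass {V : Type*} (G : SimpleGraph V) (k : ℕ) (C : Finset (List V)) : Prop :=
  (∀ l ∈ C, l.length = k ∧ l.Nodup ∧ l.Chain' G.Adj) ∧
  ∀ x : V, ∃! l : List V, l ∈ C ∧ x ∈ l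

/-- All edges used by a class of paths. -/
def classEdges {V : Type*} [DecidableEq V] (C : Finset (List V)) : Finset (Sym2 V) :=
  C.biUnion pathEdges

/-- A uniformly resolvable `(P₂,P₃,P₄)`-decomposition of `G` into `r` perfect matchings
(parallel classes of `P₂`), `s` parallel classes of `P₃` and `t` parallel classes of `P₄`:
pairwise edge-disjoint classes whose edges together are exactly the edges of `G`. -/
def IsURD {V : Type*} [DecidableEq V] (G : SimpleGraph V) (r s t : ℕ) : Prop :=
  ∃ F : Fin r ⊕ Fin s ⊕ Fin t → Finset (List V),
    (∀ i, IsPathClass G (Sum.elim (fun _ => 2) (Sum.elim (fun _ => 3) (fun _ => 4)) i) (F i)) ∧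
    (∀ i j, i ≠ j → Disjoint (classEdges (F i)) (classEdges (F j))) ∧
    (∀ e, e ∈ G.edgeSet ↔ ∃ i, e ∈ classEdges (F i))

/-- A parallel class of copies of `K_n` in `G`: a set of `n`-element blocks, each
inducing a clique of `G`, which are pairwise disjoint and cover every vertex. -/
def IsCliqueClass {V : Type*} (G : SimpleGraph V) (n : ℕ) (C : Finset (Finset V)) : Prop :=
  (∀ b ∈ C, b.card = n ∧ ∀ x ∈ b, ∀ y ∈ b, x ≠ y → G.Adj x y) ∧
  ∀ x : V, ∃! b : Finset V, b ∈ C ∧ x ∈ b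

/-- All edges covered by a class of cliques. -/
def cliqueEdges {V : Type*} [DecidableEq V] (C : Finset (Finset V)) : Finset (Sym2 V) :=
  C.biUnion fun b => b.sym2.filter fun e => ¬ e.IsDiag

/-- The complete multipartite graph with `u` parts each of size `g`. -/
def multipartiteG (u g : ℕ) : SimpleGraph (Fin u × Fin g) :=
  SimpleGraph.comap Prod.fst ⊤

/-- `foldSum h X` is the `h`-fold sumset `h * X`: all sums of `h` elements of `X`
(with repetition allowed); by convention `foldSum 0 X = {0}`. -/
def foldSum {α : Type*} [AddMonoid α] : ℕ → Set α → Set α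
  | 0, _ => {0}
  | n + 1, X => foldSum n X + X


section Aux
variable {V W : Type*}

lemma chain'_zip_tail {R : V → V → Prop} :
    ∀ {l : List V}, l.Chain' R → ∀ p ∈ l.zip l.tail, R p.1 p.2
  | [], _, p, hp => by simp at hp
  | [a], _, p, hp => by simp at hp
  | a :: b :: t, h, p, hp => by
      simp only [List.Chain', List.isChain_cons_cons] at h
      rw [show (a :: b :: t).tail = b :: t from rfl, List.zip_cons_cons, List.mem_cons] at hp
      rcases hp with rfl | hp'
      · exact h.1
      · exact chain'_zip_tail h.2 p hp'

lemma mem_pathEdges_iff [DecidableEq V] {l : List V} {e : Sym2 V} :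
    e ∈ pathEdges l ↔ ∃ p ∈ l.zip l.tail, Sym2.mk p.1 p.2 = e := by
  simp [pathEdges]

lemma pathEdges_mem_edgeSet [DecidableEq V] {G : SimpleGraph V} {l : List V}
    (h : l.Chain' G.Adj) {e : Sym2 V} (he : e ∈ pathEdges l) : e ∈ G.edgeSet := by
  obtain ⟨p, hp, rfl⟩ := mem_pathEdges_iff.1 he
  exact chain'_zip_tail h p hp

lemma mem_of_mem_pathEdges [DecidableEq V] {l : List V} {e : Sym2 V} {x : V}
    (he : e ∈ pathEdges l) (hx : x ∈ e) : x ∈ l := by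
  obtain ⟨p, hp, rfl⟩ := mem_pathEdges_iff.1 he
  obtain ⟨h1, h2⟩ := List.of_mem_zip hp
  rcases Sym2.mem_iff.1 hx with rfl | rfl
  · exact h1
  · exact l.tail_sublist.mem h2

lemma pathEdges_map [DecidableEq V] [DecidableEq W] (f : V → W) (l : List V) :
    pathEdges (l.map f) = (pathEdges l).image (Sym2.map f) := by
  ext e
  simp only [pathEdges, List.mem_toFinset, List.mem_map, Finset.mem_image]
  constructor
  · rintro ⟨p, hp, rfl⟩
    rw [← List.map_tail, List.zip_map, List.mem_map] at hp
    obtain ⟨q, hq, rfl⟩ := hp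
    exact ⟨Sym2.mk q.1 q.2, ⟨q, hq, rfl⟩, rfl⟩
  · rintro ⟨e', ⟨q, hq, rfl⟩, rfl⟩
    refine ⟨Prod.map f f q, ?_, rfl⟩
    rw [← List.map_tail, List.zip_map]
    exact List.mem_map.2 ⟨q, hq, rfl⟩

lemma mem_classEdges [DecidableEq V] {C : Finset (List V)} {e : Sym2 V} :
    e ∈ classEdges C ↔ ∃ l ∈ C, e ∈ pathEdges l := by
  simp [classEdges]

lemma classEdges_image [DecidableEq V] [DecidableEq W] (f : V → W) (C : Finset (List V)) :
    classEdges (C.image (List.map f)) = (classEdges C).image (Sym2.map f) := by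
  ext e
  simp only [mem_classEdges, Finset.mem_image]
  constructor
  · rintro ⟨l, hl, he⟩
    obtain ⟨l₀, hl₀, rfl⟩ := hl
    rw [pathEdges_map, Finset.mem_image] at he
    obtain ⟨e₀, he₀, rfl⟩ := he
    exact ⟨e₀, ⟨l₀, hl₀, he₀⟩, rfl⟩
  · rintro ⟨e₀, he₀, rfl⟩
    obtain ⟨l₀, hl₀, he₀⟩ := he₀
    refine ⟨l₀.map f, ⟨l₀, hl₀, rfl⟩, ?_⟩
    rw [pathEdges_map]
    exact Finset.mem_image.2 ⟨e₀, he₀, rfl⟩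

lemma classEdges_biUnion [DecidableEq V] {β : Type*} [DecidableEq β] (s : Finset β)
    (f : β → Finset (List V)) :
    classEdges (s.biUnion f) = s.biUnion fun b => classEdges (f b) := by
  simp [classEdges, Finset.biUnion_biUnion]

end Aux

/-- A "local" URD: classes of paths living inside the fiber of `b` under `π`,
covering that fiber, decomposing `G` (whose edges lie inside that fiber). -/
def LocalURD {W β : Type*} [DecidableEq W] (π : W → β) (b : β) (G : SimpleGraph W)
    (r s t : ℕ) : Prop :=
  (∀ x y, G.Adj x y → π x = b) ∧
  ∃ F : Fin r ⊕ Fin s ⊕ Fin t → Finset (List W),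
    (∀ i, (∀ l ∈ F i,
        l.length = (Sum.elim (fun _ => 2) (Sum.elim (fun _ => 3) (fun _ => 4)) i) ∧
        l.Nodup ∧ l.Chain' G.Adj ∧ ∀ x ∈ l, π x = b) ∧
      ∀ x, π x = b → ∃! l : List W, l ∈ F i ∧ x ∈ l) ∧
    (∀ i j, i ≠ j → Disjoint (classEdges (F i)) (classEdges (F j))) ∧
    (∀ e, e ∈ G.edgeSet ↔ ∃ i, e ∈ classEdges (F i))

lemma localURD_map {V W : Type*} [DecidableEq V] [DecidableEq W] {G : SimpleGraph V}
    {r s t : ℕ} (h : IsURD G r s t) (f : V ↪ W) {β : Type*} (π : W → β) (b : β)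
    (hf : ∀ x, π x = b ↔ x ∈ Set.range f) :
    LocalURD π b (G.map f) r s t := by
  obtain ⟨F, hF1, hF2, hF3⟩ := h
  constructor
  · intro x y hxy
    rw [SimpleGraph.map_adj] at hxy
    obtain ⟨a, a', _, rfl, rfl⟩ := hxy
    exact (hf _).2 ⟨a, rfl⟩
  refine ⟨fun i => (F i).image (List.map f), ?_, ?_, ?_⟩
  · intro i
    constructor
    · intro l hl
      obtain ⟨l₀, hl₀, rfl⟩ := Finset.mem_image.1 hl
      obtain ⟨hlen, hnd, hch⟩ := (hF1 i).1 l₀ hl₀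
      refine ⟨by simp [hlen], hnd.map f.injective, ?_, ?_⟩
      · simp only [List.Chain', List.isChain_map]
        exact hch.imp fun a a' hadj => SimpleGraph.map_adj_apply.2 hadj
      · intro x hx
        obtain ⟨a, _, rfl⟩ := List.mem_map.1 hx
        exact (hf _).2 ⟨a, rfl⟩
    · intro x hx
      obtain ⟨a, rfl⟩ := (hf x).1 hx
      obtain ⟨l, ⟨hl, hal⟩, huniq⟩ := (hF1 i).2 a
      refine ⟨l.map f, ⟨Finset.mem_image.2 ⟨l, hl, rfl⟩, List.mem_map.2 ⟨a, hal, rfl⟩⟩, ?_⟩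
      rintro l' ⟨hl', hml'⟩
      obtain ⟨l₀, hl₀, rfl⟩ := Finset.mem_image.1 hl'
      obtain ⟨a', ha', hfa⟩ := List.mem_map.1 hml'
      cases f.injective hfa
      rw [huniq l₀ ⟨hl₀, ha'⟩]
  · intro i j hij
    rw [classEdges_image, classEdges_image]
    exact (Finset.disjoint_image (Sym2.map.injective f.injective)).2 (hF2 i j hij)
  · intro e
    constructor
    · intro he
      induction e with
      | _ x y =>
        rw [SimpleGraph.mem_edgeSet, SimpleGraph.map_adj] at he
        obtain ⟨a, a', hadj, rfl, rfl⟩ := he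
        obtain ⟨i, hi⟩ := (hF3 s(a, a')).1 ((G.mem_edgeSet).2 hadj)
        refine ⟨i, ?_⟩
        rw [classEdges_image]
        exact Finset.mem_image.2 ⟨s(a, a'), hi, rfl⟩
    · rintro ⟨i, hi⟩
      rw [classEdges_image] at hi
      obtain ⟨e₀, he₀, rfl⟩ := Finset.mem_image.1 hi
      have : e₀ ∈ G.edgeSet := (hF3 e₀).2 ⟨i, he₀⟩
      induction e₀ with
      | _ a a' =>
        rw [Sym2.map_pair_eq, SimpleGraph.mem_edgeSet]
        exact SimpleGraph.map_adj_apply.2 ((G.mem_edgeSet).1 this)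

lemma adj_finsetSup {ι W : Type*} (S : Finset ι) (G : ι → SimpleGraph W) (x y : W) :
    (S.sup G).Adj x y ↔ ∃ i ∈ S, (G i).Adj x y := by
  induction S using Finset.cons_induction with
  | empty => simp
  | cons a S ha ih =>
    rw [Finset.sup_cons]
    simp only [SimpleGraph.sup_adj, ih, Finset.mem_cons]
    constructor
    · rintro (h | ⟨i, hi, h⟩)
      · exact ⟨a, Or.inl rfl, h⟩
      · exact ⟨i, Or.inr hi, h⟩
    · rintro ⟨i, (rfl | hi), h⟩
      · exact Or.inl h
      · exact Or.inr ⟨i, hi, h⟩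

lemma mem_edgeSet_finsetSup {ι W : Type*} (S : Finset ι) (G : ι → SimpleGraph W)
    (e : Sym2 W) : e ∈ (S.sup G).edgeSet ↔ ∃ i ∈ S, e ∈ (G i).edgeSet := by
  induction e with
  | _ x y => simp only [SimpleGraph.mem_edgeSet, adj_finsetSup]

lemma isURD_layer {W β : Type*} [DecidableEq W] [Fintype β] [DecidableEq β]
    (π : W → β) (Gb : β → SimpleGraph W) {r s t : ℕ}
    (h : ∀ b, LocalURD π b (Gb b) r s t) :
    IsURD (Finset.univ.sup Gb) r s t := by
  have hπ : ∀ b x y, (Gb b).Adj x y → π x = b := fun b => (h b).1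
  choose F hF1 hF2 hF3 using fun b => (h b).2
  refine ⟨fun i => Finset.univ.biUnion fun b => F b i, ?_, ?_, ?_⟩
  · intro i
    constructor
    · intro l hl
      obtain ⟨b, _, hlb⟩ := Finset.mem_biUnion.1 hl
      obtain ⟨hlen, hnd, hch, _⟩ := (hF1 b i).1 l hlb
      refine ⟨hlen, hnd, hch.imp fun a a' hadj => ?_⟩
      rw [adj_finsetSup]
      exact ⟨b, Finset.mem_univ b, hadj⟩
    · intro x
      obtain ⟨l, ⟨hl, hxl⟩, huniq⟩ := (hF1 (π x) i).2 x rfl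
      refine ⟨l, ⟨Finset.mem_biUnion.2 ⟨π x, Finset.mem_univ _, hl⟩, hxl⟩, ?_⟩
      rintro l' ⟨hl', hxl'⟩
      obtain ⟨b', _, hlb'⟩ := Finset.mem_biUnion.1 hl'
      have hb' : π x = b' := ((hF1 b' i).1 l' hlb').2.2.2 x hxl'
      exact huniq l' ⟨hb' ▸ hlb', hxl'⟩
  · intro i j hij
    rw [Finset.disjoint_left]
    intro e hei hej
    rw [classEdges_biUnion] at hei hej
    obtain ⟨b, _, hei⟩ := Finset.mem_biUnion.1 hei
    obtain ⟨b', _, hej⟩ := Finset.mem_biUnion.1 hej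
    have heb : e ∈ (Gb b).edgeSet := (hF3 b e).2 ⟨i, hei⟩
    have heb' : e ∈ (Gb b').edgeSet := (hF3 b' e).2 ⟨j, hej⟩
    have hbb' : b = b' := by
      induction e with
      | _ x y =>
        rw [SimpleGraph.mem_edgeSet] at heb heb'
        rw [← hπ b x y heb, hπ b' x y heb']
    subst hbb'
    exact Finset.disjoint_left.1 (hF2 b i j hij) hei hej
  · intro e
    rw [mem_edgeSet_finsetSup]
    constructor
    · rintro ⟨b, _, heb⟩
      obtain ⟨i, hi⟩ := (hF3 b e).1 heb
      refine ⟨i, ?_⟩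
      rw [classEdges_biUnion]
      exact Finset.mem_biUnion.2 ⟨b, Finset.mem_univ _, hi⟩
    · rintro ⟨i, hi⟩
      rw [classEdges_biUnion] at hi
      obtain ⟨b, _, hib⟩ := Finset.mem_biUnion.1 hi
      exact ⟨b, Finset.mem_univ _, (hF3 b e).2 ⟨i, hib⟩⟩

def tripleMix (r₁ s₁ t₁ r₂ s₂ t₂ : ℕ) :
    (Fin (r₁ + r₂) ⊕ Fin (s₁ + s₂) ⊕ Fin (t₁ + t₂)) →
      ((Fin r₁ ⊕ Fin s₁ ⊕ Fin t₁) ⊕ (Fin r₂ ⊕ Fin s₂ ⊕ Fin t₂)) :=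
  Sum.elim
    (fun j => (finSumFinEquiv.symm j).elim (fun a => .inl (.inl a)) (fun a => .inr (.inl a)))
    (Sum.elim
      (fun j => (finSumFinEquiv.symm j).elim (fun a => .inl (.inr (.inl a)))
        (fun a => .inr (.inr (.inl a))))
      (fun j => (finSumFinEquiv.symm j).elim (fun a => .inl (.inr (.inr a)))
        (fun a => .inr (.inr (.inr a)))))

lemma tripleMix_kind (r₁ s₁ t₁ r₂ s₂ t₂ : ℕ)
    (i : Fin (r₁ + r₂) ⊕ Fin (s₁ + s₂) ⊕ Fin (t₁ + t₂)) :
    Sum.elim (Sum.elim (fun _ => (2:ℕ)) (Sum.elim (fun _ => 3) (fun _ => 4)))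
      (Sum.elim (fun _ => (2:ℕ)) (Sum.elim (fun _ => 3) (fun _ => 4)))
      (tripleMix r₁ s₁ t₁ r₂ s₂ t₂ i) =
    Sum.elim (fun _ => (2:ℕ)) (Sum.elim (fun _ => 3) (fun _ => 4)) i := by
  rcases i with j | j | j <;>
    rcases hj : finSumFinEquiv.symm j with a | a <;>
    simp [tripleMix, hj]

lemma tripleMix_injective (r₁ s₁ t₁ r₂ s₂ t₂ : ℕ) :
    Function.Injective (tripleMix r₁ s₁ t₁ r₂ s₂ t₂) := by
  intro i i' h
  rcases i with j | j | j <;> rcases i' with j' | j' | j' <;>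
    rcases hj : finSumFinEquiv.symm j with a | a <;>
    rcases hj' : finSumFinEquiv.symm j' with a' | a' <;>
    simp [tripleMix, hj, hj'] at h
  all_goals (cases h; rw [finSumFinEquiv.symm.injective (hj.trans hj'.symm)])

lemma tripleMix_surjective (r₁ s₁ t₁ r₂ s₂ t₂ : ℕ) :
    Function.Surjective (tripleMix r₁ s₁ t₁ r₂ s₂ t₂) := by
  rintro ((a | a | a) | (a | a | a))
  · exact ⟨Sum.inl (finSumFinEquiv (Sum.inl a)), by simp [tripleMix]⟩
  · exact ⟨Sum.inr (Sum.inl (finSumFinEquiv (Sum.inl a))), by simp [tripleMix]⟩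
  · exact ⟨Sum.inr (Sum.inr (finSumFinEquiv (Sum.inl a))), by simp [tripleMix]⟩
  · exact ⟨Sum.inl (finSumFinEquiv (Sum.inr a)), by simp [tripleMix]⟩
  · exact ⟨Sum.inr (Sum.inl (finSumFinEquiv (Sum.inr a))), by simp [tripleMix]⟩
  · exact ⟨Sum.inr (Sum.inr (finSumFinEquiv (Sum.inr a))), by simp [tripleMix]⟩

lemma isURD_sup2 {W : Type*} [DecidableEq W] {G₁ G₂ : SimpleGraph W}
    {r₁ s₁ t₁ r₂ s₂ t₂ : ℕ} (h₁ : IsURD G₁ r₁ s₁ t₁) (h₂ : IsURD G₂ r₂ s₂ t₂)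
    (hd : Disjoint G₁.edgeSet G₂.edgeSet) :
    IsURD (G₁ ⊔ G₂) (r₁ + r₂) (s₁ + s₂) (t₁ + t₂) := by
  obtain ⟨F₁, hA1, hB1, hC1⟩ := h₁
  obtain ⟨F₂, hA2, hB2, hC2⟩ := h₂
  set FF := Sum.elim F₁ F₂ with hFFdef
  have hsub1 : ∀ x e, e ∈ classEdges (F₁ x) → e ∈ G₁.edgeSet :=
    fun x e he => (hC1 e).2 ⟨x, he⟩
  have hsub2 : ∀ x e, e ∈ classEdges (F₂ x) → e ∈ G₂.edgeSet :=
    fun x e he => (hC2 e).2 ⟨x, he⟩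
  have hpath : ∀ x, IsPathClass (G₁ ⊔ G₂)
      (Sum.elim (Sum.elim (fun _ => (2:ℕ)) (Sum.elim (fun _ => 3) (fun _ => 4)))
        (Sum.elim (fun _ => (2:ℕ)) (Sum.elim (fun _ => 3) (fun _ => 4))) x) (FF x) := by
    rintro (x | x)
    · refine ⟨fun l hl => ?_, (hA1 x).2⟩
      obtain ⟨h1, h2, h3⟩ := (hA1 x).1 l hl
      exact ⟨h1, h2, h3.imp fun a b hab => Or.inl hab⟩
    · refine ⟨fun l hl => ?_, (hA2 x).2⟩
      obtain ⟨h1, h2, h3⟩ := (hA2 x).1 l hl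
      exact ⟨h1, h2, h3.imp fun a b hab => Or.inr hab⟩
  have hdisj : ∀ x y, x ≠ y → Disjoint (classEdges (FF x)) (classEdges (FF y)) := by
    rintro (x | x) (y | y) hxy
    · exact hB1 x y fun hc => hxy (by rw [hc])
    · exact Finset.disjoint_left.2 fun e he1 he2 =>
        Set.disjoint_left.1 hd (hsub1 x e he1) (hsub2 y e he2)
    · exact Finset.disjoint_left.2 fun e he1 he2 =>
        Set.disjoint_left.1 hd (hsub1 y e he2) (hsub2 x e he1)
    · exact hB2 x y fun hc => hxy (by rw [hc])
  have hcover : ∀ e, e ∈ (G₁ ⊔ G₂).edgeSet ↔ ∃ x, e ∈ classEdges (FF x) := by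
    intro e
    rw [SimpleGraph.edgeSet_sup]
    constructor
    · rintro (he | he)
      · obtain ⟨i, hi⟩ := (hC1 e).1 he; exact ⟨Sum.inl i, hi⟩
      · obtain ⟨i, hi⟩ := (hC2 e).1 he; exact ⟨Sum.inr i, hi⟩
    · rintro ⟨x | x, hx⟩
      · exact Or.inl ((hC1 e).2 ⟨x, hx⟩)
      · exact Or.inr ((hC2 e).2 ⟨x, hx⟩)
  refine ⟨fun i => FF (tripleMix r₁ s₁ t₁ r₂ s₂ t₂ i), ?_, ?_, ?_⟩
  · intro i
    have := hpath (tripleMix r₁ s₁ t₁ r₂ s₂ t₂ i)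
    rwa [tripleMix_kind] at this
  · intro i j hij
    exact hdisj _ _ fun hc => hij (tripleMix_injective _ _ _ _ _ _ hc)
  · intro e
    rw [hcover]
    constructor
    · rintro ⟨x, hx⟩
      obtain ⟨i, rfl⟩ := tripleMix_surjective r₁ s₁ t₁ r₂ s₂ t₂ x
      exact ⟨i, hx⟩
    · rintro ⟨i, hi⟩
      exact ⟨tripleMix r₁ s₁ t₁ r₂ s₂ t₂ i, hi⟩

lemma isURD_bot {W : Type*} [DecidableEq W] : IsURD (⊥ : SimpleGraph W) 0 0 0 := by
  refine ⟨fun _ => ∅, ?_, ?_, ?_⟩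
  · rintro (⟨_, ⟨⟩⟩ | ⟨_, ⟨⟩⟩ | ⟨_, ⟨⟩⟩)
  · rintro (⟨_, ⟨⟩⟩ | ⟨_, ⟨⟩⟩ | ⟨_, ⟨⟩⟩)
  · intro e
    simp only [SimpleGraph.edgeSet_bot, Set.mem_empty_iff_false, false_iff]
    rintro ⟨(⟨_, ⟨⟩⟩ | ⟨_, ⟨⟩⟩ | ⟨_, ⟨⟩⟩), -⟩

lemma isURD_finsetSup {ι W : Type*} [DecidableEq W] [DecidableEq ι] (S : Finset ι)
    (G : ι → SimpleGraph W) (r s t : ι → ℕ)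
    (hd : ∀ i ∈ S, ∀ j ∈ S, i ≠ j → Disjoint (G i).edgeSet (G j).edgeSet)
    (h : ∀ i ∈ S, IsURD (G i) (r i) (s i) (t i)) :
    IsURD (S.sup G) (∑ i ∈ S, r i) (∑ i ∈ S, s i) (∑ i ∈ S, t i) := by
  induction S using Finset.cons_induction with
  | empty => simpa using isURD_bot
  | cons a S ha ih =>
    rw [Finset.sup_cons, Finset.sum_cons, Finset.sum_cons, Finset.sum_cons]
    refine isURD_sup2 (h a (Finset.mem_cons_self a S)) (ih ?_ ?_) ?_
    · intro i hi j hj hij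
      exact hd i (Finset.mem_cons_of_mem hi) j (Finset.mem_cons_of_mem hj) hij
    · intro i hi
      exact h i (Finset.mem_cons_of_mem hi)
    · rw [Set.disjoint_left]
      intro e he1 he2
      rw [mem_edgeSet_finsetSup] at he2
      obtain ⟨i, hi, he2⟩ := he2
      have hai : a ≠ i := fun hc => ha (hc ▸ hi)
      exact Set.disjoint_left.1
        (hd a (Finset.mem_cons_self a S) i (Finset.mem_cons_of_mem hi) hai) he1 he2

def grpEmb (u g t : ℕ) (b : Fin u) : Fin (g * t) ↪ (Fin u × Fin g) × Fin t :=
  ⟨fun c => ((b, (finProdFinEquiv.symm c).1), (finProdFinEquiv.symm c).2), by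
    intro c c' hcc
    simp only [Prod.mk.injEq] at hcc
    apply finProdFinEquiv.symm.injective
    exact Prod.ext hcc.1.2 hcc.2⟩

lemma grpEmb_range (u g t : ℕ) (b : Fin u) (x : (Fin u × Fin g) × Fin t) :
    x ∈ Set.range (grpEmb u g t b) ↔ x.1.1 = b := by
  constructor
  · rintro ⟨c, rfl⟩; rfl
  · intro hb
    refine ⟨finProdFinEquiv (x.1.2, x.2), ?_⟩
    show ((b, (finProdFinEquiv.symm (finProdFinEquiv (x.1.2, x.2))).1),
      (finProdFinEquiv.symm (finProdFinEquiv (x.1.2, x.2))).2) = x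
    rw [Equiv.symm_apply_apply, ← hb]

lemma groupLayer (u g t : ℕ) {r s t' : ℕ}
    (hurd : IsURD (⊤ : SimpleGraph (Fin (g * t))) r s t') :
    ∃ H : SimpleGraph ((Fin u × Fin g) × Fin t),
      IsURD H r s t' ∧ (∀ x y, H.Adj x y → x.1.1 = y.1.1) ∧
      (∀ x y : (Fin u × Fin g) × Fin t, x ≠ y → x.1.1 = y.1.1 → H.Adj x y) := by
  refine ⟨Finset.univ.sup fun b => (⊤ : SimpleGraph (Fin (g * t))).map (grpEmb u g t b),
    ?_, ?_, ?_⟩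
  · exact isURD_layer (fun x => x.1.1) _ fun b =>
      localURD_map hurd (grpEmb u g t b) _ b (fun x => (grpEmb_range u g t b x).symm)
  · intro x y hxy
    rw [adj_finsetSup] at hxy
    obtain ⟨b, -, hxy⟩ := hxy
    rw [SimpleGraph.map_adj] at hxy
    obtain ⟨a, a', -, rfl, rfl⟩ := hxy
    rw [(grpEmb_range u g t b _).1 ⟨a, rfl⟩, (grpEmb_range u g t b _).1 ⟨a', rfl⟩]
  · intro x y hxy heq
    rw [adj_finsetSup]
    refine ⟨x.1.1, Finset.mem_univ _, ?_⟩
    rw [SimpleGraph.map_adj]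
    obtain ⟨a, ha⟩ := (grpEmb_range u g t x.1.1 x).2 rfl
    obtain ⟨a', ha'⟩ := (grpEmb_range u g t x.1.1 y).2 heq.symm
    exact ⟨a, a', fun hc => hxy (by rw [← ha, ← ha', hc]), ha, ha'⟩

noncomputable def blkEmb {u g : ℕ} (n t : ℕ) (blk : Finset (Fin u × Fin g))
    (hc : blk.card = n) : Fin n × Fin t ↪ (Fin u × Fin g) × Fin t :=
  ⟨fun p => ((((blk.equivFinOfCardEq hc).symm p.1 : blk) : Fin u × Fin g), p.2), by
    intro p p' hpp
    simp only [Prod.mk.injEq] at hpp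
    refine Prod.ext ?_ hpp.2
    exact (blk.equivFinOfCardEq hc).symm.injective (Subtype.coe_injective hpp.1)⟩

lemma blkEmb_range {u g : ℕ} (n t : ℕ) (blk : Finset (Fin u × Fin g))
    (hc : blk.card = n) (x : (Fin u × Fin g) × Fin t) :
    x ∈ Set.range (blkEmb n t blk hc) ↔ x.1 ∈ blk := by
  constructor
  · rintro ⟨p, rfl⟩
    exact (((blk.equivFinOfCardEq hc).symm p.1 : blk)).2
  · intro hx
    refine ⟨(blk.equivFinOfCardEq hc ⟨x.1, hx⟩, x.2), ?_⟩
    show ((((blk.equivFinOfCardEq hc).symm (blk.equivFinOfCardEq hc ⟨x.1, hx⟩) : blk) :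
      Fin u × Fin g), x.2) = x
    rw [Equiv.symm_apply_apply]

lemma blkEmb_fst_ne {u g : ℕ} (n t : ℕ) (blk : Finset (Fin u × Fin g))
    (hc : blk.card = n) {p p' : Fin n × Fin t} (hne : p.1 ≠ p'.1) :
    (blkEmb n t blk hc p).1 ≠ (blkEmb n t blk hc p').1 := by
  simp only [blkEmb, Function.Embedding.coeFn_mk]
  exact fun hcc => hne ((blk.equivFinOfCardEq hc).symm.injective (Subtype.coe_injective hcc))

lemma multipartiteG_adj {u g : ℕ} (a b : Fin u × Fin g) :
    (multipartiteG u g).Adj a b ↔ a.1 ≠ b.1 := Iff.rfl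

lemma blockLayer {u g n t : ℕ} (K : Finset (Finset (Fin u × Fin g)))
    (hK : IsCliqueClass (multipartiteG u g) n K)
    {r s t' : ℕ} (hurd : IsURD (multipartiteG n t) r s t') :
    ∃ H : SimpleGraph ((Fin u × Fin g) × Fin t),
      IsURD H r s t' ∧
      (∀ x y, H.Adj x y → x.1 ≠ y.1 ∧ ∃ blk ∈ K, x.1 ∈ blk ∧ y.1 ∈ blk) ∧
      (∀ x y : (Fin u × Fin g) × Fin t, ∀ blk ∈ K, x.1 ∈ blk → y.1 ∈ blk →
        x.1 ≠ y.1 → H.Adj x y) := by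
  classical
  have hcard : ∀ b : {blk // blk ∈ K}, (b : Finset (Fin u × Fin g)).card = n :=
    fun b => (hK.1 b.1 b.2).1
  set Gb : {blk // blk ∈ K} → SimpleGraph ((Fin u × Fin g) × Fin t) :=
    fun b => (multipartiteG n t).map (blkEmb n t b.1 (hcard b)) with hGb
  set π : (Fin u × Fin g) × Fin t → {blk // blk ∈ K} :=
    fun x => ⟨K.choose (fun blk => x.1 ∈ blk) (hK.2 x.1),
      Finset.choose_mem (fun blk => x.1 ∈ blk) K (hK.2 x.1)⟩ with hπ
  have hπ_eq : ∀ x (b : {blk // blk ∈ K}), π x = b ↔ x.1 ∈ b.1 := by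
    intro x b
    constructor
    · rintro rfl
      exact Finset.choose_property (fun blk => x.1 ∈ blk) K (hK.2 x.1)
    · intro hxb
      exact Subtype.ext ((hK.2 x.1).unique
        ⟨Finset.choose_mem _ _ _, Finset.choose_property (fun blk => x.1 ∈ blk) K (hK.2 x.1)⟩
        ⟨b.2, hxb⟩)
  refine ⟨Finset.univ.sup Gb, ?_, ?_, ?_⟩
  · exact isURD_layer π Gb fun b => localURD_map hurd (blkEmb n t b.1 (hcard b)) π b
      (fun x => (hπ_eq x b).trans (blkEmb_range n t b.1 (hcard b) x).symm)
  · intro x y hxy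
    rw [adj_finsetSup] at hxy
    obtain ⟨b, -, hxy⟩ := hxy
    rw [hGb, SimpleGraph.map_adj] at hxy
    obtain ⟨p, p', hadj, rfl, rfl⟩ := hxy
    rw [multipartiteG_adj] at hadj
    refine ⟨blkEmb_fst_ne n t b.1 (hcard b) hadj, b.1, b.2, ?_, ?_⟩
    · exact (blkEmb_range n t b.1 (hcard b) _).1 ⟨p, rfl⟩
    · exact (blkEmb_range n t b.1 (hcard b) _).1 ⟨p', rfl⟩
  · intro x y blk hm hx hy hne
    rw [adj_finsetSup]
    refine ⟨⟨blk, hm⟩, Finset.mem_univ _, ?_⟩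
    rw [hGb, SimpleGraph.map_adj]
    set e := blk.equivFinOfCardEq (hcard ⟨blk, hm⟩) with he
    refine ⟨(e ⟨x.1, hx⟩, x.2), (e ⟨y.1, hy⟩, y.2), ?_, ?_, ?_⟩
    · rw [multipartiteG_adj]
      exact fun hcc => hne (congrArg Subtype.val (e.injective hcc))
    · simp only [blkEmb, Function.Embedding.coeFn_mk, ← he, Equiv.symm_apply_apply]
    · simp only [blkEmb, Function.Embedding.coeFn_mk, ← he, Equiv.symm_apply_apply]

lemma isURD_top_equiv {A B : Type*} [DecidableEq A] [DecidableEq B] (e : A ≃ B)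
    {r s t : ℕ} (h : IsURD (⊤ : SimpleGraph A) r s t) :
    IsURD (⊤ : SimpleGraph B) r s t := by
  have hloc : ∀ b : PUnit.{1}, LocalURD (fun _ : B => PUnit.unit) b
      ((⊤ : SimpleGraph A).map e.toEmbedding) r s t := by
    intro b
    cases b
    exact localURD_map h e.toEmbedding _ _
      (fun x => iff_of_true rfl ⟨e.symm x, by simp⟩)
  have := isURD_layer (fun _ : B => PUnit.unit) _ hloc
  rw [Finset.sup_const Finset.univ_nonempty] at this
  convert this using 1
  ext x y
  rw [SimpleGraph.map_adj]
  simp only [SimpleGraph.top_adj, SimpleGraph.map_adj, Equiv.coe_toEmbedding]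
  constructor
  · intro hxy
    exact ⟨e.symm x, e.symm y, fun hc => hxy (by rw [← e.apply_symm_apply x,
      ← e.apply_symm_apply y, hc]), e.apply_symm_apply x, e.apply_symm_apply y⟩
  · rintro ⟨a, a', haa, rfl, rfl⟩
    exact fun hc => haa (e.injective hc)

lemma mem_cliqueEdges {V : Type*} [DecidableEq V] {K : Finset (Finset V)} {a b : V}
    {blk : Finset V} (hm : blk ∈ K) (ha : a ∈ blk) (hb : b ∈ blk) (hab : a ≠ b) :
    s(a, b) ∈ cliqueEdges K :=
  Finset.mem_biUnion.2 ⟨blk, hm, Finset.mem_filter.2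
    ⟨Finset.mk_mem_sym2_iff.2 ⟨ha, hb⟩, by simpa using hab⟩⟩

lemma exists_of_mem_cliqueEdges {V : Type*} [DecidableEq V] {K : Finset (Finset V)}
    {a b : V} (h : s(a, b) ∈ cliqueEdges K) : ∃ blk ∈ K, a ∈ blk ∧ b ∈ blk ∧ a ≠ b := by
  obtain ⟨blk, hm, hf⟩ := Finset.mem_biUnion.1 h
  obtain ⟨hs, hd⟩ := Finset.mem_filter.1 hf
  obtain ⟨ha, hb⟩ := Finset.mk_mem_sym2_iff.1 hs
  exact ⟨blk, hm, ha, hb, by simpa using hd⟩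

lemma foldSum_exists {α : Type*} [AddCommMonoid α] :
    ∀ (h : ℕ) (X : Set α) (x : α), x ∈ foldSum h X →
      ∃ f : Fin h → α, (∀ i, f i ∈ X) ∧ x = ∑ i, f i
  | 0, X, x, hx => by
      refine ⟨Fin.elim0, fun i => i.elim0, ?_⟩
      simpa [foldSum] using hx
  | n + 1, X, x, hx => by
      obtain ⟨y, hy, z, hz, rfl⟩ := Set.mem_add.1 hx
      obtain ⟨f, hf, rfl⟩ := foldSum_exists n X y hy
      refine ⟨Fin.snoc f z, fun i => ?_, ?_⟩
      · induction i using Fin.lastCases with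
        | last => simpa using hz
        | cast j => simpa using hf j
      · rw [Fin.sum_univ_castSucc]
        simp


/-- Theorem 3.3 (the RGDD filling construction).  Suppose `v = g·t·u` and
(1) the complete multipartite graph of type `g^u` has a resolvable decomposition into
copies of `K_n` whose blocks split into `h = g(u-1)/(n-1)` parallel classes,
(2) for each `(r₁,s₁,t₁) ∈ J₁` the complete multipartite graph of type `t^n` has a
uniformly resolvable `(P₂,P₃,P₄)`-decomposition with those class numbers, and
(3) for each `(r₂,s₂,t₂) ∈ J₂` the complete graph `K_{gt}` has one as well.
Then for each `(r,s,t) ∈ J₂ + h * J₁`, `K_v` has a uniformly resolvable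
`(P₂,P₃,P₄)`-decomposition with `r` matchings, `s` `P₃`-classes and `t` `P₄`-classes. -/
theorem stmt17 (v g u n t h : ℕ) (hv0 : 0 < v) (hg : 0 < g) (hu : 0 < u) (hn : 0 < n)
    (ht : 0 < t) (hv : v = g * t * u) (hh : h = g * (u - 1) / (n - 1))
    (J1 J2 : Set (ℕ × ℕ × ℕ))
    (hRGDD : ∃ K : Fin h → Finset (Finset (Fin u × Fin g)),
      (∀ i, IsCliqueClass (multipartiteG u g) n (K i)) ∧
      (∀ i j, i ≠ j → Disjoint (cliqueEdges (K i)) (cliqueEdges (K j))) ∧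
      (∀ e, e ∈ (multipartiteG u g).edgeSet ↔ ∃ i, e ∈ cliqueEdges (K i)))
    (hJ1 : ∀ p ∈ J1, IsURD (multipartiteG n t) p.1 p.2.1 p.2.2)
    (hJ2 : ∀ p ∈ J2, IsURD (⊤ : SimpleGraph (Fin (g * t))) p.1 p.2.1 p.2.2) :
    ∀ p ∈ J2 + foldSum h J1, IsURD (⊤ : SimpleGraph (Fin v)) p.1 p.2.1 p.2.2 := by
  classical
  intro p hp
  obtain ⟨K, hK1, hK2, hK3⟩ := hRGDD
  obtain ⟨p₂, hp₂, w, hw, rfl⟩ := Set.mem_add.1 hp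
  obtain ⟨q, hq, rfl⟩ := foldSum_exists h J1 w hw
  obtain ⟨H₀, hH₀urd, hH₀fwd, hH₀bwd⟩ := groupLayer u g t (hJ2 p₂ hp₂)
  choose Hb hHburd hHbfwd hHbbwd using fun i : Fin h =>
    blockLayer (K i) (hK1 i) (hJ1 (q i) (hq i))
  have hHbdisj : ∀ i ∈ Finset.univ, ∀ j ∈ Finset.univ, i ≠ j →
      Disjoint (Hb i).edgeSet (Hb j).edgeSet := by
    intro i _ j _ hij
    rw [Set.disjoint_left]
    intro e he1 he2
    induction e with
    | _ x y =>
      rw [SimpleGraph.mem_edgeSet] at he1 he2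
      obtain ⟨hxy, blk, hm, hx, hy⟩ := hHbfwd i x y he1
      obtain ⟨-, blk', hm', hx', hy'⟩ := hHbfwd j x y he2
      exact Finset.disjoint_left.1 (hK2 i j hij)
        (mem_cliqueEdges hm hx hy hxy) (mem_cliqueEdges hm' hx' hy' hxy)
  have hBB : IsURD (Finset.univ.sup Hb) (∑ i, (q i).1) (∑ i, (q i).2.1) (∑ i, (q i).2.2) :=
    isURD_finsetSup Finset.univ Hb _ _ _ hHbdisj (fun i _ => hHburd i)
  have hd0 : Disjoint H₀.edgeSet (Finset.univ.sup Hb).edgeSet := by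
    rw [Set.disjoint_left]
    intro e he1 he2
    rw [mem_edgeSet_finsetSup] at he2
    obtain ⟨i, -, he2⟩ := he2
    induction e with
    | _ x y =>
      rw [SimpleGraph.mem_edgeSet] at he1 he2
      have h1 := hH₀fwd x y he1
      obtain ⟨hxy, blk, hm, hx, hy⟩ := hHbfwd i x y he2
      exact ((multipartiteG_adj _ _).1 (((hK1 i).1 blk hm).2 x.1 hx y.1 hy hxy)) h1
  have hsum := isURD_sup2 hH₀urd hBB hd0
  have htop : H₀ ⊔ Finset.univ.sup Hb = (⊤ : SimpleGraph ((Fin u × Fin g) × Fin t)) := by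
    ext x y
    simp only [SimpleGraph.sup_adj, SimpleGraph.top_adj]
    constructor
    · rintro (hxy | hxy)
      · exact hxy.ne
      · exact hxy.ne
    · intro hxy
      by_cases hgr : x.1.1 = y.1.1
      · exact Or.inl (hH₀bwd x y hxy hgr)
      · right
        have hadj : (multipartiteG u g).Adj x.1 y.1 := (multipartiteG_adj _ _).2 hgr
        obtain ⟨i, hi⟩ := (hK3 s(x.1, y.1)).1 (((multipartiteG u g).mem_edgeSet).2 hadj)
        obtain ⟨blk, hm, hx1, hy1, hne⟩ := exists_of_mem_cliqueEdges hi
        rw [adj_finsetSup]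
        exact ⟨i, Finset.mem_univ i, hHbbwd i x y blk hm hx1 hy1 hne⟩
  rw [htop] at hsum
  have hcardW : Fintype.card ((Fin u × Fin g) × Fin t) = v := by
    simp only [Fintype.card_prod, Fintype.card_fin, hv]
    ring
  have hfin := isURD_top_equiv (Fintype.equivFinOfCardEq hcardW) hsum
  have e1 : (∑ i, q i).1 = ∑ i, (q i).1 := map_sum (AddMonoidHom.fst ℕ (ℕ × ℕ)) q Finset.univ
  have e2 : (∑ i, q i).2 = ∑ i, (q i).2 := map_sum (AddMonoidHom.snd ℕ (ℕ × ℕ)) q Finset.univ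
  have e3 : (∑ i, (q i).2).1 = ∑ i, (q i).2.1 :=
    map_sum (AddMonoidHom.fst ℕ ℕ) (fun i => (q i).2) Finset.univ
  have e4 : (∑ i, (q i).2).2 = ∑ i, (q i).2.2 :=
    map_sum (AddMonoidHom.snd ℕ ℕ) (fun i => (q i).2) Finset.univ
  have h1 : (p₂ + ∑ i, q i).1 = p₂.1 + ∑ i, (q i).1 := by rw [Prod.fst_add, e1]
  have h2 : (p₂ + ∑ i, q i).2.1 = p₂.2.1 + ∑ i, (q i).2.1 := by
    rw [Prod.snd_add, Prod.fst_add, e2, e3]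
  have h3 : (p₂ + ∑ i, q i).2.2 = p₂.2.2 + ∑ i, (q i).2.2 := by
    rw [Prod.snd_add, Prod.snd_add, e2, e4]
  rw [h1, h2, h3]
  exact hfin
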